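/- arXiv:2002.08540 — 3 statements merged into one kernel-verified Lean document; each statement's English description precedes it below -/
import Mathlib

section
/- If E is a torsion-free virtually cyclic group, then E is cyclic. -/
/-- The old Mathlib definition: a monoid is torsion-free if no nontrivial element has finite order. -/
def Monoid.IsTorsionFree (G : Type*) [Monoid G] : Prop :=
  ∀ g : G, g ≠ 1 → ¬IsOfFinOrder g

open Subgroup Function

private lemma zpowersIsCyclic' {G : Type*} [Group G] (a : G) :
    IsCyclic (Subgroup.zpowers a) := by
  refine ⟨⟨a, Subgroup.mem_zpowers a⟩, fun x => ?_⟩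
  obtain ⟨n, hn⟩ := Subgroup.mem_zpowers_iff.mp x.2
  exact Subgroup.mem_zpowers_iff.mpr ⟨n, Subtype.ext (by push_cast; exact hn)⟩

private lemma isCyclicOfInjective' {G H : Type*} [Group G] [Group H] [IsCyclic H]
    (f : G →* H) (hf : Injective f) : IsCyclic G :=
  isCyclic_of_surjective (MonoidHom.ofInjective hf).symm (MulEquiv.surjective _)

/-- A torsion-free virtually cyclic group is cyclic. -/
theorem torsionFree_virtuallyCyclic_isCyclic (E : Type*) [Group E]
    (hvc : ∃ H : Subgroup E, IsCyclic H ∧ H.FiniteIndex)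
    (htf : Monoid.IsTorsionFree E) : IsCyclic E := by
  obtain ⟨H, hHc, hHfi⟩ := hvc
  haveI := hHc; haveI := hHfi
  haveI hNfi : H.normalCore.FiniteIndex := inferInstance
  set N := H.normalCore with hNdef
  have hpow_eq_one : ∀ (x : E) (n : ℕ), n ≠ 0 → x ^ n = 1 → x = 1 := by
    intro x n hn h1
    by_contra hx
    exact htf x hx (isOfFinOrder_iff_pow_eq_one.mpr ⟨n, Nat.pos_of_ne_zero hn, h1⟩)
  by_cases hN : N = ⊥
  · -- E is finite, hence trivial, hence cyclic
    haveI : Finite E := by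
      have h0 := hNfi.index_ne_zero
      rw [hN, Subgroup.index_bot] at h0
      exact (Nat.card_ne_zero.mp h0).2
    have hone : ∀ x : E, x = 1 := by
      intro x
      by_contra hx
      exact htf x hx (isOfFinOrder_of_finite x)
    haveI : Subsingleton E := ⟨fun x y => (hone x).trans (hone y).symm⟩
    infer_instance
  · haveI hNcyc : IsCyclic N := Subgroup.isCyclic_of_le H.normalCore_le
    obtain ⟨g, hg⟩ := hNcyc.exists_generator
    set a : E := (g : E) with hadef
    have hZ : Subgroup.zpowers a = N := by
      refine le_antisymm (Subgroup.zpowers_le.mpr g.2) fun x hx => ?_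
      obtain ⟨n, hn⟩ := Subgroup.mem_zpowers_iff.mp (hg ⟨x, hx⟩)
      exact Subgroup.mem_zpowers_iff.mpr ⟨n, by
        have := congrArg Subtype.val hn
        push_cast at this
        exact this⟩
    have ha1 : a ≠ 1 := by
      intro h
      apply hN
      rw [← hZ, h, Subgroup.zpowers_one_eq_bot]
    have hainj : Injective fun n : ℤ => a ^ n :=
      injective_zpow_iff_not_isOfFinOrder.mpr (htf a ha1)
    haveI hNnorm : N.Normal := H.normalCore_normal
    have haN : a ∈ N := g.2
    have hconj : ∀ x : E, x * a * x⁻¹ = a ∨ x * a * x⁻¹ = a⁻¹ := by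
      intro x
      have h1 : x * a * x⁻¹ ∈ N := hNnorm.conj_mem a haN x
      have h2 : x⁻¹ * a * x ∈ N := by
        have := hNnorm.conj_mem a haN x⁻¹
        rwa [inv_inv] at this
      rw [← hZ] at h1 h2
      obtain ⟨k, hk⟩ := Subgroup.mem_zpowers_iff.mp h1
      obtain ⟨l, hl⟩ := Subgroup.mem_zpowers_iff.mp h2
      have hcalc : a ^ (l * k) = a ^ (1 : ℤ) := by
        calc a ^ (l * k) = (a ^ l) ^ k := zpow_mul a l k
          _ = (x⁻¹ * a * (x⁻¹)⁻¹) ^ k := by rw [inv_inv, hl]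
          _ = x⁻¹ * a ^ k * (x⁻¹)⁻¹ := conj_zpow
          _ = x⁻¹ * (x * a * x⁻¹) * x := by rw [inv_inv, hk]
          _ = a ^ (1 : ℤ) := by group
      have hlk : l * k = 1 := hainj hcalc
      rcases Int.eq_one_or_neg_one_of_mul_eq_one (by rw [mul_comm] at hlk; exact hlk) with hk1 | hk1
      · left; rw [hk1] at hk; rw [← hk, zpow_one]
      · right; rw [hk1] at hk; rw [← hk]; simp
    -- the centralizer of a
    set C := Subgroup.centralizer {a} with hCdef
    have haC : a ∈ C := Subgroup.mem_centralizer_iff.mpr (by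
      rintro h hh
      rw [Set.mem_singleton_iff] at hh
      rw [hh])
    have hZC : Subgroup.zpowers a ≤ C := Subgroup.zpowers_le.mpr haC
    haveI : (Subgroup.zpowers a).FiniteIndex := hZ ▸ hNfi
    haveI hCfi : C.FiniteIndex := Subgroup.finiteIndex_of_le hZC
    -- elements of C commute with a
    have hCcomm : ∀ y : E, y ∈ C → a * y = y * a := by
      intro y hy
      exact Subgroup.mem_centralizer_iff.mp hy a rfl
    -- K = zpowers a inside C is central in C
    set K := (Subgroup.zpowers a).subgroupOf C with hKdef
    haveI hKfi : K.FiniteIndex := Subgroup.instFiniteIndex_subgroupOf _ _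
    have hKcenter : K ≤ Subgroup.center C := by
      intro y hy
      rw [Subgroup.mem_center_iff]
      intro z
      obtain ⟨n, hn⟩ := Subgroup.mem_zpowers_iff.mp (Subgroup.mem_subgroupOf.mp hy)
      have hza : Commute (z : E) a := (hCcomm z z.2).symm
      have : Commute (z : E) (y : E) := by rw [← hn]; exact hza.zpow_right n
      exact Subtype.ext this
    haveI : (Subgroup.center C).FiniteIndex := Subgroup.finiteIndex_of_le hKcenter
    -- C is torsion-free
    have htfC : ∀ y : C, y ≠ 1 → ¬IsOfFinOrder y := by
      intro y hy hfin
      have h1 : (y : E) ≠ 1 := fun h => hy (Subtype.ext h)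
      exact htf (y : E) h1 (C.subtype.isOfFinOrder hfin)
    have hpowC : ∀ (y : C) (n : ℕ), n ≠ 0 → y ^ n = 1 → y = 1 := by
      intro y n hn h1
      by_contra hy
      exact htfC y hy (isOfFinOrder_iff_pow_eq_one.mpr ⟨n, Nat.pos_of_ne_zero hn, h1⟩)
    -- C is abelian, via the transfer map to its center
    have hfinj : Injective (MonoidHom.transferCenterPow C) := by
      rw [injective_iff_map_eq_one]
      intro y hy
      have h1 : (y : C) ^ (Subgroup.center C).index = 1 := by
        have h2 := congrArg Subtype.val hy
        rwa [MonoidHom.transferCenterPow_apply] at h2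
      exact hpowC y _ (Subgroup.FiniteIndex.index_ne_zero) h1
    have hcomm : ∀ x y : C, x * y = y * x := by
      intro x y
      apply hfinj
      rw [map_mul, map_mul]
      exact Subtype.ext (Subgroup.mem_center_iff.mp (MonoidHom.transferCenterPow C y).2 _)
    -- C is cyclic
    haveI : K.Normal := ⟨by
      intro n hn z
      have : z * n * z⁻¹ = n := by rw [hcomm z n]; group
      rwa [this]⟩
    have hm0 : K.index ≠ 0 := hKfi.index_ne_zero
    let ψ : C →* K := {
      toFun := fun x => ⟨x ^ K.index, K.pow_index_mem x⟩
      map_one' := by ext; simp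
      map_mul' := fun x y => Subtype.ext (Commute.mul_pow (hcomm x y) K.index) }
    have hψinj : Injective ψ := by
      rw [injective_iff_map_eq_one]
      intro y hy
      exact hpowC y _ hm0 (congrArg Subtype.val hy)
    haveI : IsCyclic (Subgroup.zpowers a) := zpowersIsCyclic' a
    haveI : IsCyclic K :=
      isCyclic_of_surjective (Subgroup.subgroupOfEquivOfLe hZC).symm (MulEquiv.surjective _)
    haveI hCcyc : IsCyclic C := isCyclicOfInjective' ψ hψinj
    -- finally, C = ⊤
    obtain ⟨c, hc⟩ := hCcyc.exists_generator
    set cE : E := (c : E) with hcEdef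
    have hcmem : ∀ y : E, y ∈ C → ∃ n : ℤ, cE ^ n = y := by
      intro y hy
      obtain ⟨n, hn⟩ := Subgroup.mem_zpowers_iff.mp (hc ⟨y, hy⟩)
      exact ⟨n, by
        have := congrArg Subtype.val hn
        push_cast at this
        exact this⟩
    obtain ⟨j, hj⟩ := hcmem a haC
    have hj0 : j ≠ 0 := by
      intro h
      apply ha1
      rw [← hj, h, zpow_zero]
    have hcE1 : cE ≠ 1 := by
      intro h
      apply ha1
      rw [← hj, h, one_zpow]
    have hcinj : Injective fun n : ℤ => cE ^ n :=
      injective_zpow_iff_not_isOfFinOrder.mpr (htf cE hcE1)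
    have hca : a * cE = cE * a := hCcomm cE c.2
    have hCtop : ∀ x : E, x ∈ C := by
      intro x
      rcases hconj x with hxa | hxa
      · apply Subgroup.mem_centralizer_iff.mpr
        rintro h hh
        rw [Set.mem_singleton_iff] at hh
        subst hh
        exact (mul_inv_eq_iff_eq_mul.mp hxa).symm
      · -- x inverts a
        have hxinv : x⁻¹ * a * x = a⁻¹ := by
          have h1 : a = x⁻¹ * a⁻¹ * x := by rw [← hxa]; group
          calc x⁻¹ * a * x = (x⁻¹ * a⁻¹ * x)⁻¹ := by group
            _ = a⁻¹ := by rw [← h1]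
        -- x c x⁻¹ ∈ C
        have hxC : x * cE * x⁻¹ ∈ C := by
          apply Subgroup.mem_centralizer_iff.mpr
          rintro h hh
          rw [Set.mem_singleton_iff] at hh
          subst hh
          have h2 : (x⁻¹ * a * x) * cE = cE * (x⁻¹ * a * x) := by
            rw [hxinv]
            exact ((Commute.inv_left (show Commute a cE from hca)).eq)
          calc a * (x * cE * x⁻¹) = x * ((x⁻¹ * a * x) * cE) * x⁻¹ := by group
            _ = x * (cE * (x⁻¹ * a * x)) * x⁻¹ := by rw [h2]
            _ = (x * cE * x⁻¹) * a := by group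
        obtain ⟨k, hk⟩ := hcmem _ hxC
        -- k must be -1
        have hkey : cE ^ (k * j) = cE ^ (-j) := by
          calc cE ^ (k * j) = (cE ^ k) ^ j := zpow_mul cE k j
            _ = (x * cE * x⁻¹) ^ j := by rw [hk]
            _ = x * cE ^ j * x⁻¹ := conj_zpow
            _ = x * a * x⁻¹ := by rw [hj]
            _ = a⁻¹ := hxa
            _ = (cE ^ j)⁻¹ := by rw [hj]
            _ = cE ^ (-j) := by rw [← zpow_neg]
        have hkj : k * j = -j := hcinj hkey
        have hk1 : k = -1 := by
          rcases mul_eq_zero.mp (show (k + 1) * j = 0 by rw [add_mul, one_mul, hkj]; ring)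
            with h | h
          · omega
          · exact absurd h hj0
        have h5 : x * cE * x⁻¹ = cE⁻¹ := by
          rw [← hk, hk1, zpow_neg_one]
        -- x ^ 2 ∈ C
        have h4 : x⁻¹ * a⁻¹ * x = a := by
          calc x⁻¹ * a⁻¹ * x = (x⁻¹ * a * x)⁻¹ := by group
            _ = a := by rw [hxinv, inv_inv]
        have hx2C : x * x ∈ C := by
          apply Subgroup.mem_centralizer_iff.mpr
          rintro h hh
          rw [Set.mem_singleton_iff] at hh
          subst hh
          calc a * (x * x) = x * (x⁻¹ * a * x) * x := by group
            _ = x * a⁻¹ * x := by rw [hxinv]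
            _ = (x * x) * (x⁻¹ * a⁻¹ * x) := by group
            _ = (x * x) * a := by rw [h4]
        obtain ⟨i, hi⟩ := hcmem _ hx2C
        have h6 : cE ^ i = cE ^ (-i) := by
          calc cE ^ i = x * x := hi
            _ = x * (x * x) * x⁻¹ := by group
            _ = x * cE ^ i * x⁻¹ := by rw [hi]
            _ = (x * cE * x⁻¹) ^ i := conj_zpow.symm
            _ = (cE⁻¹) ^ i := by rw [h5]
            _ = cE ^ (-i) := by rw [inv_zpow, ← zpow_neg]
        have hi0 : i = 0 := by have := hcinj h6; omega
        have hx1 : x = 1 := by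
          apply hpow_eq_one x 2 (by norm_num)
          rw [pow_two, ← hi, hi0, zpow_zero]
        rw [hx1]; exact C.one_mem
    have : ∀ y : E, y ∈ Subgroup.zpowers cE := by
      intro y
      obtain ⟨n, hn⟩ := hcmem y (hCtop y)
      exact Subgroup.mem_zpowers_iff.mpr ⟨n, hn⟩
    exact ⟨cE, this⟩
end

section
/- Every infinite virtually cyclic group E contains normal subgroups T ≤ E⁺ ≤ E such that the index of E⁺ in E is at most 2, T is finite, and E⁺/T is isomorphic to ℤ. -/
open Subgroup
open scoped Classical
open scoped IsMulCommutative



noncomputable def infCyclicMulEquivInt (G : Type*) [Group G] [IsCyclic G] [Infinite G] :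
    G ≃* Multiplicative ℤ :=
  mulEquivOfCyclicCardEq (by simp [Nat.card_eq_zero_of_infinite])

theorem multiplicative_int_eq_one_of_finOrder {a : Multiplicative ℤ} (h : IsOfFinOrder a) :
    a = 1 := by
  obtain ⟨n, hn, h1⟩ := isOfFinOrder_iff_pow_eq_one.mp h
  have h2 : (n : ℤ) * Multiplicative.toAdd a = 0 := by
    have := congrArg Multiplicative.toAdd h1
    simpa [toAdd_pow, nsmul_eq_mul] using this
  rcases mul_eq_zero.mp h2 with h | h
  · exact absurd (by exact_mod_cast h) hn.ne'
  · exact (Multiplicative.toAdd).injective (by simpa using h)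

theorem conj_dichotomy {E : Type*} [Group E] {N : Subgroup E} [N.Normal] {z : E}
    (hzN : zpowers z = N)
    (hzord : ¬ IsOfFinOrder z) (g : E) : g * z * g⁻¹ = z ∨ g * z * g⁻¹ = z⁻¹ := by
  have inj : Function.Injective fun n : ℤ => z ^ n :=
    injective_zpow_iff_not_isOfFinOrder.mpr hzord
  have hz : z ∈ N := hzN ▸ mem_zpowers z
  obtain ⟨k, hk⟩ : g * z * g⁻¹ ∈ zpowers z := hzN ▸ Subgroup.Normal.conj_mem ‹N.Normal› z hz g
  obtain ⟨m, hm⟩ : g⁻¹ * z * g⁻¹⁻¹ ∈ zpowers z := hzN ▸ Subgroup.Normal.conj_mem ‹N.Normal› z hz g⁻¹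
  simp only at hk hm
  rw [inv_inv] at hm
  have key : z ^ (m * k) = z ^ (1 : ℤ) := by
    rw [zpow_mul, hm, zpow_one]
    calc (g⁻¹ * z * g) ^ k = g⁻¹ * z ^ k * g := by
          rw [show g⁻¹ * z * g = g⁻¹ * z * g⁻¹⁻¹ by rw [inv_inv], conj_zpow, inv_inv]
      _ = z := by rw [hk]; group
  have hmk : m * k = 1 := inj key
  rcases Int.eq_one_or_neg_one_of_mul_eq_one' (mul_comm m k ▸ hmk) with ⟨h, _⟩ | ⟨h, _⟩
  · left; rw [← hk, h, zpow_one]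
  · right; rw [← hk, h, zpow_neg_one]

theorem psi_hom {E : Type*} [Group E] {z : E}
    (D : ∀ g : E, g * z * g⁻¹ = z ∨ g * z * g⁻¹ = z⁻¹) (hz2 : z ≠ z⁻¹) :
    ∃ ψ : E →* ℤˣ, ∀ g, (ψ g = 1 ↔ g * z * g⁻¹ = z) := by
  have conj_conj : ∀ a b : E, (a * b) * z * (a * b)⁻¹ = a * (b * z * b⁻¹) * a⁻¹ := by
    intro a b; group
  refine ⟨MonoidHom.mk' (fun g => if g * z * g⁻¹ = z then 1 else -1) ?_, ?_⟩
  · intro a b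
    rcases D b with hb | hb
    · have hab : (a * b) * z * (a * b)⁻¹ = a * z * a⁻¹ := by rw [conj_conj, hb]
      beta_reduce; rw [hab, hb, if_pos rfl, mul_one]
    · have hbne : ¬ (b * z * b⁻¹ = z) := fun h => hz2 (h.symm.trans hb)
      have hab : (a * b) * z * (a * b)⁻¹ = (a * z * a⁻¹)⁻¹ := by
        rw [conj_conj, hb]; group
      rcases D a with ha | ha
      · have : (a * b) * z * (a * b)⁻¹ = z⁻¹ := by rw [hab, ha]
        have hne : ¬ ((a * b) * z * (a * b)⁻¹ = z) := by
          rw [this]; exact fun h => hz2 h.symm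
        beta_reduce; rw [if_neg hne, if_pos ha, if_neg hbne, one_mul]
      · have haz : ¬ (a * z * a⁻¹ = z) := by rw [ha]; exact fun h => hz2 h.symm
        have : (a * b) * z * (a * b)⁻¹ = z := by rw [hab, ha, inv_inv]
        beta_reduce; rw [if_pos this, if_neg haz, if_neg hbne]
        decide
  · intro g
    by_cases h : g * z * g⁻¹ = z
    · simp [h]
    · simp only [MonoidHom.mk'_apply, if_neg h]
      constructor
      · intro h1; exact absurd h1 (by decide)
      · intro h1; exact absurd h1 h

/-- Every infinite virtually cyclic group `E` contains normal subgroups `T ≤ E⁺ ≤ E`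
with `[E : E⁺] ≤ 2`, `T` finite, and `E⁺/T ≃ ℤ`. -/
theorem infinite_virtuallyCyclic_structure (E : Type*) [Group E] [Infinite E]
    (hvc : ∃ H : Subgroup E, IsCyclic H ∧ H.FiniteIndex) :
    ∃ T Ep : Subgroup E, T ≤ Ep ∧ T.Normal ∧ Ep.Normal ∧ Ep.index ≤ 2 ∧
      Finite T ∧ ∃ φ : Ep →* Multiplicative ℤ, Function.Surjective φ ∧
        φ.ker = T.subgroupOf Ep := by
  obtain ⟨H, hHcyc, hHfi⟩ := hvc
  -- the normal core N : infinite cyclic normal subgroup of finite index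
  set N := H.normalCore with hNdef
  haveI : N.FiniteIndex := H.finiteIndex_normalCore
  haveI hNnormal : N.Normal := H.normalCore_normal
  haveI : IsCyclic N := Subgroup.isCyclic_of_le H.normalCore_le
  haveI : Infinite N := by
    by_contra hfin
    haveI : Finite N := not_infinite_iff_finite.mp hfin
    have h1 : Nat.card N * N.index = Nat.card E := N.card_mul_index
    have : Nat.card E ≠ 0 :=
      h1 ▸ Nat.mul_ne_zero Nat.card_pos.ne' FiniteIndex.index_ne_zero
    exact absurd (Nat.card_eq_zero_of_infinite) this
  -- generator z
  obtain ⟨gN, hgN⟩ := IsCyclic.exists_generator (α := N)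
  set z : E := (gN : E) with hzdef
  have hzN : zpowers z = N := by
    ext x
    constructor
    · rintro ⟨k, rfl⟩
      exact zpow_mem gN.2 k
    · intro hx
      obtain ⟨k, hk⟩ := hgN ⟨x, hx⟩
      exact ⟨k, congrArg Subtype.val hk⟩
  have hzord : ¬ IsOfFinOrder z := by
    intro h
    have hfin : ((N : Set E)).Finite := hzN ▸ finite_zpowers.mpr h
    haveI := hfin.to_subtype; exact not_finite N
  have hzinj : Function.Injective fun n : ℤ => z ^ n :=
    injective_zpow_iff_not_isOfFinOrder.mpr hzord
  have hz2 : z ≠ z⁻¹ := by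
    intro h
    have : z ^ (2 : ℤ) = z ^ (0 : ℤ) := by
      rw [zpow_two, zpow_zero]; nth_rewrite 2 [h]; exact mul_inv_cancel z
    exact absurd (hzinj this) (by norm_num)
  have D := conj_dichotomy hzN hzord
  obtain ⟨ψ, hψ⟩ := psi_hom D hz2
  -- Ep := ker ψ
  set Ep := ψ.ker with hEpdef
  haveI hEpNormal : Ep.Normal := ψ.normal_ker
  have hmemEp : ∀ g : E, g ∈ Ep ↔ g * z * g⁻¹ = z := fun g => hψ g
  have hEpindex : Ep.index ≤ 2 := by
    rw [hEpdef, Subgroup.index_ker]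
    calc Nat.card ψ.range ≤ Nat.card ℤˣ := Nat.card_le_card_of_injective _ Subtype.val_injective
      _ = 2 := by simp
  -- z belongs to Ep and is central there
  have hzEp : z ∈ Ep := (hmemEp z).mpr (by group)
  set zE : Ep := ⟨z, hzEp⟩ with hzEdef
  have hzEcentral : zE ∈ center Ep := by
    rw [Subgroup.mem_center_iff]
    intro g
    have h1 := (hmemEp (g : E)).mp g.2
    have h2 : (g : E) * z = z * g := by rwa [mul_inv_eq_iff_eq_mul] at h1
    ext
    simpa using h2
  have hzEord : ¬ IsOfFinOrder zE := fun h => hzord (by simpa using Ep.subtype.isOfFinOrder h)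
  -- S := zpowers zE has finite index in Ep
  set S : Subgroup Ep := zpowers zE with hSdef
  have hSsub : S = (zpowers z).subgroupOf Ep := by
    ext x
    simp only [hSdef, mem_zpowers_iff, mem_subgroupOf, Subgroup.mem_zpowers_iff]
    constructor
    · rintro ⟨k, rfl⟩; exact ⟨k, by simp [hzEdef]⟩
    · rintro ⟨k, hk⟩; exact ⟨k, by ext; simpa using hk⟩
  haveI hSfi : S.FiniteIndex := by
    constructor
    have : S.index = (zpowers z).relIndex Ep := by rw [hSsub]; rfl
    rw [this]
    have hdvd : (zpowers z).relIndex Ep ∣ (zpowers z).index := by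
      have : (zpowers z).Normal := hzN ▸ hNnormal
      exact Subgroup.relIndex_dvd_index_of_normal (zpowers z) Ep
    intro h0
    rw [h0] at hdvd
    have : (zpowers z).index = 0 := zero_dvd_iff.mp hdvd
    exact absurd this (hzN ▸ (FiniteIndex.index_ne_zero : N.index ≠ 0))
  haveI hSnormal : S.Normal := by
    constructor
    rintro x ⟨k, rfl⟩ g
    have hcom : Commute g (zE ^ k) :=
      Commute.zpow_right (Subgroup.mem_center_iff.mp hzEcentral g) k
    have hconj : g * zE ^ k * g⁻¹ = zE ^ k := by
      rw [hcom.eq, mul_inv_cancel_right]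
    exact hconj ▸ zpow_mem (mem_zpowers zE) k
  have hSle : S ≤ center Ep := zpowers_le.mpr hzEcentral
  haveI : FiniteIndex (center Ep) := Subgroup.finiteIndex_of_le hSle
  -- zc : generator inside the center
  set zc : center Ep := ⟨zE, hzEcentral⟩ with hzcdef
  have hzcord : ¬ IsOfFinOrder zc :=
    fun h => hzEord (by simpa using (center Ep).subtype.isOfFinOrder h)
  set Sc : Subgroup (center Ep) := zpowers zc with hScdef
  have hScsub : Sc = S.subgroupOf (center Ep) := by
    ext x
    simp only [hScdef, mem_zpowers_iff, mem_subgroupOf, hSdef, Subgroup.mem_zpowers_iff]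
    constructor
    · rintro ⟨k, rfl⟩; exact ⟨k, by simp [hzcdef]⟩
    · rintro ⟨k, hk⟩
      exact ⟨k, Subtype.ext (by simpa [hzcdef] using hk)⟩
  haveI hScfi : Sc.FiniteIndex := by
    constructor
    have heq : Sc.index = S.relIndex (center Ep) := by rw [hScsub]; rfl
    rw [heq]
    have hdvd : S.relIndex (center Ep) ∣ S.index :=
      Subgroup.relIndex_dvd_index_of_normal S (center Ep)
    intro h0
    rw [h0] at hdvd
    exact hSfi.index_ne_zero (zero_dvd_iff.mp hdvd)
  set n := (center Ep).index with hn
  set m := Sc.index with hm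
  have hn0 : n ≠ 0 := FiniteIndex.index_ne_zero
  have hm0 : m ≠ 0 := FiniteIndex.index_ne_zero
  set t := MonoidHom.transferCenterPow Ep with ht
  set q : center Ep →* Sc :=
    (powMonoidHom m).codRestrict Sc (fun w => Sc.pow_index_mem w) with hq
  haveI : IsCyclic Sc := by
    constructor
    refine ⟨⟨zc, mem_zpowers zc⟩, ?_⟩
    rintro ⟨x, k, rfl⟩
    exact ⟨k, Subtype.ext (by simp)⟩
  haveI : Infinite Sc := (infinite_zpowers.mpr hzcord).to_subtype
  set l := infCyclicMulEquivInt Sc with hl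
  set big : Ep →* Multiplicative ℤ := l.toMonoidHom.comp (q.comp t) with hbig
  have factA : ∀ g : Ep, g ∈ big.ker → g ^ (n * m) = 1 := by
    intro g hg
    rw [MonoidHom.mem_ker, hbig] at hg
    have h1 : q (t g) = 1 := l.injective (by simpa using hg)
    have h2 : ((t g : center Ep)) ^ m = 1 := by
      have := congrArg Subtype.val h1
      simpa [hq, powMonoidHom] using this
    have h3 : ((t g : Ep) : Ep) ^ m = 1 := by
      have := congrArg Subtype.val h2
      simpa using this
    have h4 : (t g : Ep) = g ^ n := MonoidHom.transferCenterPow_apply g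
    rw [h4] at h3
    rw [pow_mul]
    exact h3
  have factB : ∀ k : ℤ, zE ^ k ∈ big.ker → k = 0 := by
    intro k hk
    have h1 := factA _ hk
    have h2 : zE ^ (k * (n * m : ℕ) : ℤ) = zE ^ (0 : ℤ) := by
      rw [zpow_zero, zpow_mul, zpow_natCast, h1]
    have hinj : Function.Injective fun j : ℤ => zE ^ j :=
      injective_zpow_iff_not_isOfFinOrder.mpr hzEord
    have h3 : k * (n * m : ℕ) = 0 := hinj h2
    rcases mul_eq_zero.mp h3 with h | h
    · exact h
    · exact absurd (by exact_mod_cast h) (Nat.mul_ne_zero hn0 hm0)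
  haveI : Finite (Ep ⧸ S) := S.finite_quotient_of_finiteIndex
  haveI hkerfin : Finite big.ker := by
    apply Finite.of_injective (fun x : big.ker => (QuotientGroup.mk (x : Ep) : Ep ⧸ S))
    intro x y hxy
    rw [QuotientGroup.eq] at hxy
    obtain ⟨k, hk⟩ := hxy
    have hker : ((x : Ep))⁻¹ * (y : Ep) ∈ big.ker := mul_mem (inv_mem x.2) y.2
    rw [← hk] at hker
    have hk0 := factB k hker
    rw [hk0] at hk
    have : ((x : Ep))⁻¹ * (y : Ep) = 1 := by simpa using hk.symm
    exact Subtype.ext (inv_mul_eq_one.mp this)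
  haveI : Infinite big.range := by
    apply Infinite.of_injective (fun k : ℤ => (⟨big (zE ^ k), ⟨zE ^ k, rfl⟩⟩ : big.range))
    intro j k hjk
    have h1 : big (zE ^ j) = big (zE ^ k) := congrArg Subtype.val hjk
    have h2 : zE ^ (j - k) ∈ big.ker := by
      rw [MonoidHom.mem_ker, zpow_sub, map_mul, map_inv, h1, mul_inv_cancel]
    have := factB _ h2
    linarith [sub_eq_zero.mp (by exact_mod_cast this)]
  set e := infCyclicMulEquivInt big.range with he
  set φ : Ep →* Multiplicative ℤ := e.toMonoidHom.comp big.rangeRestrict with hφ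
  have hφsurj : Function.Surjective φ := e.surjective.comp big.rangeRestrict_surjective
  have hφker : φ.ker = big.ker := by
    ext g
    simp only [hφ, MonoidHom.mem_ker, MonoidHom.comp_apply, MulEquiv.coe_toMonoidHom,
      EmbeddingLike.map_eq_one_iff]
    rw [Subtype.ext_iff]
    simp [MonoidHom.coe_rangeRestrict]
  set T : Subgroup E := big.ker.map Ep.subtype with hT
  have hTle : T ≤ Ep := map_subtype_le _
  have hTsub : T.subgroupOf Ep = big.ker :=
    Subgroup.comap_map_eq_self_of_injective Ep.subtype_injective _
  haveI hTfin : Finite T :=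
    Finite.of_equiv _ (Subgroup.equivMapOfInjective big.ker Ep.subtype
      Ep.subtype_injective).toEquiv
  have hTchar : ∀ x : E, x ∈ T ↔ x ∈ Ep ∧ IsOfFinOrder x := by
    intro x
    constructor
    · rintro ⟨y, hy, rfl⟩
      refine ⟨y.2, ?_⟩
      have : IsOfFinOrder y := isOfFinOrder_iff_pow_eq_one.mpr
        ⟨n * m, Nat.pos_of_ne_zero (Nat.mul_ne_zero hn0 hm0), factA y hy⟩
      exact Ep.subtype.isOfFinOrder this
    · rintro ⟨h1, h2⟩
      set y : Ep := ⟨x, h1⟩ with hy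
      have hyord : IsOfFinOrder y := by
        have horder := orderOf_injective Ep.subtype Ep.subtype_injective y
        rw [← orderOf_pos_iff] at h2 ⊢
        rw [← horder]
        exact h2
      have : φ y = 1 := multiplicative_int_eq_one_of_finOrder (φ.isOfFinOrder hyord)
      have hymem : y ∈ big.ker := by rw [← hφker]; exact this
      exact ⟨y, hymem, rfl⟩
  have hTnormal : T.Normal := by
    constructor
    intro x hx g
    rw [hTchar] at hx ⊢
    refine ⟨hEpNormal.conj_mem x hx.1 g, ?_⟩
    simpa using (MulAut.conj g).toMonoidHom.isOfFinOrder hx.2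
  exact ⟨T, Ep, hTle, hTnormal, hEpNormal, hEpindex, hTfin, φ, hφsurj,
    by rw [hφker, hTsub]⟩
end

section
/- For any element g of infinite order in a group G, the set E(g) = {x ∈ G | ∃ n ≥ 1, x g^n x⁻¹ = g^n or x g^n x⁻¹ = g^{-n}} is a subgroup of G, and E⁺(g) = {x | ∃ n ≥ 1, x g^n x⁻¹ = g^n} is a subgroup of index at most 2 in E(g). -/
private lemma conj_pow_eq {G : Type*} [Group G] (x a : G) (m : ℕ) :
    x * a ^ m * x⁻¹ = (x * a * x⁻¹) ^ m := by
  induction m with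
  | zero => simp
  | succ k ih => rw [pow_succ, pow_succ, ← ih]; group

private lemma plus_pow {G : Type*} [Group G] {x g : G} {n : ℕ} (m : ℕ)
    (h : x * g ^ n * x⁻¹ = g ^ n) : x * g ^ (n * m) * x⁻¹ = g ^ (n * m) := by
  rw [pow_mul, conj_pow_eq, h, ← pow_mul]

private lemma minus_pow {G : Type*} [Group G] {x g : G} {n : ℕ} (m : ℕ)
    (h : x * g ^ n * x⁻¹ = (g ^ n)⁻¹) :
    x * g ^ (n * m) * x⁻¹ = (g ^ (n * m))⁻¹ := by
  rw [pow_mul, conj_pow_eq, h, inv_pow, ← pow_mul]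

private lemma conj_comb {G : Type*} [Group G] {x y a b c : G}
    (hy : y * a * y⁻¹ = b) (hx : x * b * x⁻¹ = c) :
    (x * y) * a * (x * y)⁻¹ = c := by
  rw [mul_inv_rev, show x * y * a * (y⁻¹ * x⁻¹) = x * (y * a * y⁻¹) * x⁻¹ by group,
    hy, hx]

private lemma conj_inv_aux {G : Type*} [Group G] (x a : G) :
    x * a⁻¹ * x⁻¹ = (x * a * x⁻¹)⁻¹ := by group

/-- For `g` of infinite order, `E(g)` is a subgroup and `E⁺(g)` is a subgroup of
index at most 2 in `E(g)`. -/
theorem E_is_subgroup_index_two (G : Type*) [Group G] (g : G)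
    (hg : ¬ IsOfFinOrder g) :
    ∃ S T : Subgroup G,
      (S : Set G) = {x : G | ∃ n : ℕ, 1 ≤ n ∧
        (x * g ^ n * x⁻¹ = g ^ n ∨ x * g ^ n * x⁻¹ = (g ^ n)⁻¹)} ∧
      (T : Set G) = {x : G | ∃ n : ℕ, 1 ≤ n ∧ x * g ^ n * x⁻¹ = g ^ n} ∧
      T ≤ S ∧ T.relIndex S ≤ 2 := by
  classical
  set S : Subgroup G := {
    carrier := {x : G | ∃ n : ℕ, 1 ≤ n ∧
      (x * g ^ n * x⁻¹ = g ^ n ∨ x * g ^ n * x⁻¹ = (g ^ n)⁻¹)}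
    one_mem' := ⟨1, le_refl 1, Or.inl (by group)⟩
    mul_mem' := by
      rintro x y ⟨n, hn, hx⟩ ⟨m, hm, hy⟩
      have hN : 1 ≤ n * m := Nat.one_le_iff_ne_zero.2 (by positivity)
      have hx' : x * g ^ (n * m) * x⁻¹ = g ^ (n * m) ∨
          x * g ^ (n * m) * x⁻¹ = (g ^ (n * m))⁻¹ := by
        rcases hx with hx | hx
        · exact Or.inl (plus_pow m hx)
        · exact Or.inr (minus_pow m hx)
      have hy' : y * g ^ (n * m) * y⁻¹ = g ^ (n * m) ∨
          y * g ^ (n * m) * y⁻¹ = (g ^ (n * m))⁻¹ := by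
        rw [mul_comm n m]
        rcases hy with hy | hy
        · exact Or.inl (plus_pow n hy)
        · exact Or.inr (minus_pow n hy)
      refine ⟨n * m, hN, ?_⟩
      rcases hx' with hx' | hx' <;> rcases hy' with hy' | hy'
      · exact Or.inl (conj_comb hy' hx')
      · exact Or.inr (conj_comb hy' (by rw [conj_inv_aux, hx']))
      · exact Or.inr (conj_comb hy' hx')
      · exact Or.inl (conj_comb hy' (by rw [conj_inv_aux, hx', inv_inv]))
    inv_mem' := by
      rintro x ⟨n, hn, hx⟩
      refine ⟨n, hn, ?_⟩
      rcases hx with hx | hx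
      · refine Or.inl ?_
        have := congrArg (fun z => x⁻¹ * z * x) hx
        simpa [mul_assoc] using this.symm
      · refine Or.inr ?_
        have := congrArg (fun z => x⁻¹ * z⁻¹ * x) hx
        simpa [mul_assoc] using this.symm }
  set T : Subgroup G := {
    carrier := {x : G | ∃ n : ℕ, 1 ≤ n ∧ x * g ^ n * x⁻¹ = g ^ n}
    one_mem' := ⟨1, le_refl 1, by group⟩
    mul_mem' := by
      rintro x y ⟨n, hn, hx⟩ ⟨m, hm, hy⟩
      refine ⟨n * m, Nat.one_le_iff_ne_zero.2 (by positivity), ?_⟩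
      exact conj_comb (by rw [mul_comm n m]; exact plus_pow n hy) (plus_pow m hx)
    inv_mem' := by
      rintro x ⟨n, hn, hx⟩
      refine ⟨n, hn, ?_⟩
      have := congrArg (fun z => x⁻¹ * z * x) hx
      simpa [mul_assoc] using this.symm }
  have hTS : T ≤ S := by
    rintro x ⟨n, hn, hx⟩
    exact ⟨n, hn, Or.inl hx⟩
  refine ⟨S, T, rfl, rfl, hTS, ?_⟩
  -- sign homomorphism from S to ℤˣ
  have hmul : ∀ x y : S, ((if (x * y : S).1 ∈ T then (1 : ℤˣ) else -1) =
      (if (x : S).1 ∈ T then (1 : ℤˣ) else -1) * (if (y : S).1 ∈ T then (1 : ℤˣ) else -1)) := by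
    rintro ⟨x, hxS⟩ ⟨y, hyS⟩
    by_cases hx : x ∈ T <;> by_cases hy : y ∈ T <;> simp only [hx, hy, if_true, if_false]
    · simp [T.mul_mem hx hy]
    · have : x * y ∉ T := fun h => hy (by simpa using T.mul_mem (T.inv_mem hx) h)
      simp [this]
    · have : x * y ∉ T := fun h => hx (by simpa using T.mul_mem h (T.inv_mem hy))
      simp [this]
    · -- both minus: product is plus
      obtain ⟨n, hn, hx'⟩ := hxS
      obtain ⟨m, hm, hy'⟩ := hyS
      have hxm : x * g ^ n * x⁻¹ = (g ^ n)⁻¹ := by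
        rcases hx' with h | h
        · exact absurd ⟨n, hn, h⟩ hx
        · exact h
      have hym : y * g ^ m * y⁻¹ = (g ^ m)⁻¹ := by
        rcases hy' with h | h
        · exact absurd ⟨m, hm, h⟩ hy
        · exact h
      have hmem : x * y ∈ T := by
        refine ⟨n * m, Nat.one_le_iff_ne_zero.2 (by positivity), ?_⟩
        refine conj_comb (a := g ^ (n * m)) (b := (g ^ (n * m))⁻¹)
          (by rw [mul_comm n m]; exact minus_pow n hym) ?_
        rw [conj_inv_aux, minus_pow m hxm, inv_inv]
      simp [hmem]
  let φ : S →* ℤˣ := {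
    toFun := fun x => if (x : G) ∈ T then 1 else -1
    map_one' := by simp [T.one_mem]
    map_mul' := fun x y => hmul x y }
  have hker : T.subgroupOf S = φ.ker := by
    ext x
    simp only [Subgroup.mem_subgroupOf, MonoidHom.mem_ker]
    constructor
    · intro h; simp [φ, h]
    · intro h
      by_contra hx
      simp only [φ, MonoidHom.coe_mk, OneHom.coe_mk, hx, if_false] at h
      exact absurd h (by decide)
  have : T.relIndex S = (T.subgroupOf S).index := rfl
  rw [this, hker, Subgroup.index_ker]
  calc Nat.card φ.range ≤ Nat.card ℤˣ :=
        Nat.card_le_card_of_injective _ Subtype.val_injective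
    _ = 2 := by simp [Nat.card_eq_fintype_card]
end
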